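/- Let R = ℤ/4ℤ, a finite chain ring with maximal ideal ⟨2⟩, nilpotency index s = 2, residue field of size q = 2, and M = 2. Let C ⊆ R⁴ be the linear code generated by the rows (1, 1, 1, 1), (0, 1, 0, 1), (0, 0, 2, 2). Then C has rank 3 and its socle C₀ = C ∩ ⟨2⟩⁴ is an MDS code (every nonzero element of C₀ has Hamming weight at least 2 = 4 − 3 + 1 and |C₀| = 2³), yet C is not MHD: d_Hom(C) ≤ 2 = M·(4 − 3). -/

import Mathlib

open scoped BigOperators Classical

/-- The normalized homogeneous weight on a finite chain ring with maximal ideal `⟨γ⟩`,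
nilpotency index `s` and residue field of size `q`. -/
noncomputable def wtHom {R : Type*} [CommRing R] (γ : R) (s q : ℕ) (x : R) : ℚ :=
  if x = 0 then 0
  else if x ∈ Ideal.span {γ ^ (s - 1)} then (q : ℚ) / ((q : ℚ) - 1)
  else 1

/-- Homogeneous weight of a vector: the sum of the weights of its coordinates. -/
noncomputable def wtHomV {R : Type*} [CommRing R] (γ : R) (s q : ℕ) {n : ℕ}
    (v : Fin n → R) : ℚ :=
  ∑ i, wtHom γ s q (v i)

/-- Hamming weight of a vector: the number of nonzero coordinates. -/
noncomputable def hWt {R : Type*} [Zero R] {n : ℕ} (v : Fin n → R) : ℕ :=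
  Nat.card {i : Fin n // v i ≠ 0}

/-- `K` is the rank of the code `C`: the least cardinality of a generating set of `C`
as an `R`-module. -/
def IsCodeRank {R : Type*} [CommRing R] {n : ℕ} (C : Submodule R (Fin n → R)) (K : ℕ) : Prop :=
  IsLeast {k : ℕ | ∃ S : Finset (Fin n → R),
    S.card = k ∧ Submodule.span R (S : Set (Fin n → R)) = C} K

/-- The socle of a code: the codewords all of whose coordinates lie in `⟨γ^(s-1)⟩`. -/
def socleCode {R : Type*} [CommRing R] (γ : R) (s : ℕ) {n : ℕ}
    (C : Submodule R (Fin n → R)) : Submodule R (Fin n → R) :=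
  C ⊓ Submodule.pi Set.univ (fun _ : Fin n => Ideal.span {γ ^ (s - 1)})

/- ### Auxiliary material -/

/-- The three generators of the example code. -/
abbrev exGen : Fin 3 → (Fin 4 → ZMod 4) := ![![1, 1, 1, 1], ![0, 1, 0, 1], ![0, 0, 2, 2]]

/-- Explicit linear combination of the generators. -/
def exComb (t : Fin 3 → ZMod 4) : Fin 4 → ZMod 4 :=
  fun j => t 0 * exGen 0 j + t 1 * exGen 1 j + t 2 * exGen 2 j

lemma exSet_eq :
    ({![1, 1, 1, 1], ![0, 1, 0, 1], ![0, 0, 2, 2]} : Set (Fin 4 → ZMod 4)) = Set.range exGen := by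
  simp [exGen]
  ext x; simp; tauto

lemma exSum_eq (t : Fin 3 → ZMod 4) : ∑ i, t i • exGen i = exComb t := by
  funext j
  simp [Fin.sum_univ_three, exComb]

lemma mem_exC (c : Fin 4 → ZMod 4) :
    c ∈ Submodule.span (ZMod 4) {![1, 1, 1, 1], ![0, 1, 0, 1], ![0, 0, 2, 2]} ↔
      ∃ t : Fin 3 → ZMod 4, exComb t = c := by
  rw [exSet_eq, Submodule.mem_span_range_iff_exists_fun]
  simp_rw [exSum_eq]

lemma dvd_two_iff (x : ZMod 4) : (2 : ZMod 4) ∣ x ↔ x = 0 ∨ x = 2 := by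
  constructor
  · rintro ⟨c, rfl⟩; revert c; decide
  · rintro (rfl | rfl); exacts [⟨0, rfl⟩, ⟨1, rfl⟩]

/-- A 32-element subset of the code. -/
def exBigF : Finset (Fin 4 → ZMod 4) :=
  (Finset.univ.filter fun t : Fin 3 → ZMod 4 => t 2 = 0 ∨ t 2 = 1).image exComb

/-- The socle of the code, as an explicit finset. -/
def exSocF : Finset (Fin 4 → ZMod 4) :=
  (Finset.univ.filter fun t : Fin 3 → ZMod 4 => ∀ i, exComb t i = 0 ∨ exComb t i = 2).image exComb

lemma exBigF_card : exBigF.card = 32 := by decide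

lemma exSocF_card : exSocF.card = 8 := by decide

lemma exMDS : ∀ t : Fin 3 → ZMod 4, (∀ i, exComb t i = 0 ∨ exComb t i = 2) → exComb t ≠ 0 →
    2 ≤ (Finset.univ.filter fun i => exComb t i ≠ 0).card := by decide

lemma hWt_eq {n : ℕ} (v : Fin n → ZMod 4) :
    hWt v = (Finset.univ.filter fun i => v i ≠ 0).card := by
  rw [hWt, Nat.card_eq_fintype_card]
  convert Fintype.card_subtype _

lemma mem_exSocle (c : Fin 4 → ZMod 4) :
    c ∈ socleCode (2 : ZMod 4) 2
        (Submodule.span (ZMod 4) {![1, 1, 1, 1], ![0, 1, 0, 1], ![0, 0, 2, 2]}) ↔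
      (∃ t : Fin 3 → ZMod 4, exComb t = c) ∧ ∀ i, c i = 0 ∨ c i = 2 := by
  rw [socleCode, Submodule.mem_inf, mem_exC]
  refine and_congr Iff.rfl ?_
  rw [Submodule.mem_pi]
  constructor
  · intro h i
    have := h i (Set.mem_univ i)
    rwa [pow_one, Ideal.mem_span_singleton, dvd_two_iff] at this
  · intro h i _
    rw [pow_one, Ideal.mem_span_singleton, dvd_two_iff]
    exact h i

lemma exSocle_set_eq :
    (socleCode (2 : ZMod 4) 2
        (Submodule.span (ZMod 4) {![1, 1, 1, 1], ![0, 1, 0, 1], ![0, 0, 2, 2]}) : Set (Fin 4 → ZMod 4))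
      = ↑exSocF := by
  ext c
  rw [SetLike.mem_coe, mem_exSocle, Finset.mem_coe, exSocF, Finset.mem_image]
  constructor
  · rintro ⟨⟨t, rfl⟩, h⟩
    exact ⟨t, Finset.mem_filter.2 ⟨Finset.mem_univ t, h⟩, rfl⟩
  · rintro ⟨t, ht, rfl⟩
    exact ⟨⟨t, rfl⟩, (Finset.mem_filter.1 ht).2⟩

abbrev exC : Submodule (ZMod 4) (Fin 4 → ZMod 4) :=
  Submodule.span (ZMod 4) {![1, 1, 1, 1], ![0, 1, 0, 1], ![0, 0, 2, 2]}

lemma exC_card_lower : 32 ≤ Nat.card exC := by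
  have hsub : (↑exBigF : Set (Fin 4 → ZMod 4)) ⊆ (exC : Set (Fin 4 → ZMod 4)) := by
    intro x hx
    rcases Finset.mem_image.1 hx with ⟨t, _, rfl⟩
    exact (mem_exC _).2 ⟨t, rfl⟩
  calc (32 : ℕ) = exBigF.card := exBigF_card.symm
    _ = (↑exBigF : Set (Fin 4 → ZMod 4)).ncard := (Set.ncard_coe_finset _).symm
    _ ≤ (exC : Set (Fin 4 → ZMod 4)).ncard := Set.ncard_le_ncard hsub (Set.toFinite _)
    _ = Nat.card exC := (Nat.card_coe_set_eq _).symm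

lemma span_card_le (S : Finset (Fin 4 → ZMod 4)) :
    Nat.card (Submodule.span (ZMod 4) (S : Set (Fin 4 → ZMod 4))) ≤ 4 ^ S.card := by
  classical
  set g : (↥S → ZMod 4) → (Fin 4 → ZMod 4) :=
    fun f => ∑ i ∈ S.attach, f i • (i : Fin 4 → ZMod 4) with hg
  have hsub : (Submodule.span (ZMod 4) (S : Set (Fin 4 → ZMod 4)) : Set _) ⊆
      (((Finset.univ : Finset (↥S → ZMod 4)).image g : Finset (Fin 4 → ZMod 4)) :
        Set (Fin 4 → ZMod 4)) := by
    intro x hx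
    rcases Submodule.mem_span_finset.1 hx with ⟨f, -, hf⟩
    refine Finset.mem_coe.2 (Finset.mem_image.2 ⟨fun i => f ↑i, Finset.mem_univ _, ?_⟩)
    rw [hg]
    simpa [Finset.sum_attach S (fun i => f i • i)] using hf
  calc Nat.card (Submodule.span (ZMod 4) (S : Set (Fin 4 → ZMod 4)))
      = (Submodule.span (ZMod 4) (S : Set (Fin 4 → ZMod 4)) : Set _).ncard :=
        Nat.card_coe_set_eq _
    _ ≤ (↑((Finset.univ : Finset (↥S → ZMod 4)).image g) : Set (Fin 4 → ZMod 4)).ncard :=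
        Set.ncard_le_ncard hsub (Finset.finite_toSet _)
    _ = ((Finset.univ : Finset (↥S → ZMod 4)).image g).card := Set.ncard_coe_finset _
    _ ≤ (Finset.univ : Finset (↥S → ZMod 4)).card := Finset.card_image_le
    _ = 4 ^ S.card := by
        rw [Finset.card_univ, Fintype.card_fun]
        simp [ZMod, Fintype.card_coe]
        exact Fintype.card_coe S

/-- Over `ℤ/4ℤ` the code generated by `(1,1,1,1)`, `(0,1,0,1)`, `(0,0,2,2)` has rank 3
and MDS socle, but is not MHD. -/
theorem not_mhd_example_zmod4 :
    IsCodeRank (Submodule.span (ZMod 4) {![1, 1, 1, 1], ![0, 1, 0, 1], ![0, 0, 2, 2]}) 3 ∧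
    (∀ c ∈ socleCode (2 : ZMod 4) 2
        (Submodule.span (ZMod 4) {![1, 1, 1, 1], ![0, 1, 0, 1], ![0, 0, 2, 2]}),
        c ≠ 0 → 2 ≤ hWt c) ∧
    Nat.card (socleCode (2 : ZMod 4) 2
        (Submodule.span (ZMod 4) {![1, 1, 1, 1], ![0, 1, 0, 1], ![0, 0, 2, 2]})) = 2 ^ 3 ∧
    (∃ c ∈ Submodule.span (ZMod 4) {![1, 1, 1, 1], ![0, 1, 0, 1], ![0, 0, 2, 2]},
        c ≠ 0 ∧ wtHomV (2 : ZMod 4) 2 2 c ≤ 2) := by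
  refine ⟨⟨?_, ?_⟩, ?_, ?_, ?_⟩
  · -- rank 3 is achieved
    refine ⟨({![1, 1, 1, 1], ![0, 1, 0, 1], ![0, 0, 2, 2]} : Finset (Fin 4 → ZMod 4)), ?_, ?_⟩
    · decide
    · congr 1
      simp
  · -- rank is at least 3
    rintro k ⟨S, hcard, hspan⟩
    by_contra hk
    push_neg at hk
    have h0 := span_card_le S
    rw [hspan, hcard] at h0
    have h1 : (32 : ℕ) ≤ 4 ^ k := le_trans exC_card_lower h0
    have h2 : (4 : ℕ) ^ k ≤ 4 ^ 2 := Nat.pow_le_pow_right (by norm_num) (by omega)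
    norm_num at h2
    omega
  · -- socle is MDS
    intro c hc hne
    rcases (mem_exSocle c).1 hc with ⟨⟨t, rfl⟩, h2⟩
    rw [hWt_eq]
    exact exMDS t h2 hne
  · -- socle has 8 elements
    calc Nat.card (socleCode (2 : ZMod 4) 2
          (Submodule.span (ZMod 4) {![1, 1, 1, 1], ![0, 1, 0, 1], ![0, 0, 2, 2]}))
        = Nat.card ((↑exSocF : Set (Fin 4 → ZMod 4))) :=
          Nat.card_congr (Equiv.setCongr exSocle_set_eq)
      _ = exSocF.card := by rw [Nat.card_coe_set_eq, Set.ncard_coe_finset]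
      _ = 2 ^ 3 := by rw [exSocF_card]; norm_num
  · -- a nonzero codeword of homogeneous weight 2
    refine ⟨![0, 1, 0, 1], Submodule.subset_span (by simp), ?_, ?_⟩
    · intro h
      have := congrFun h 1
      exact absurd this (by decide)
    · have h1 : ((1 : ZMod 4) ∈ Ideal.span {(2 : ZMod 4)}) = False := by
        rw [Ideal.mem_span_singleton, dvd_two_iff]
        simp only [eq_iff_iff, iff_false]
        rintro (h | h) <;> exact absurd h (by decide)
      have h0 : ((1 : ZMod 4) = 0) = False := by
        simp only [eq_iff_iff, iff_false]
        decide
      have h2 : (![0, 1, 0, 1] : Fin 4 → ZMod 4) 2 = 0 := rfl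
      have h3 : (![0, 1, 0, 1] : Fin 4 → ZMod 4) 3 = 1 := rfl
      norm_num [wtHomV, wtHom, Fin.sum_univ_four, h1, h0, h2, h3]
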